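/- arXiv:2008.04842 — 12 statements merged into one kernel-verified Lean document; each statement's English description precedes it below -/
import Mathlib

section
/- For all natural numbers n ≥ 3 and m ≥ 8, one has L_n^2 · f_{m-6} + 2 · L_n · f_n · f_{m-7} + f_n^2 · f_{m-8} = f_{n-2}^2 · f_m + 2 · f_{n-2} · f_{n-3} · f_{m-2} + f_{n-3}^2 · f_{m-4}. -/
/-- Shifted Fibonacci numbers: `f n = F (n+1)`, so `f 0 = f 1 = 1`. -/
def f (n : ℕ) : ℕ := Nat.fib (n + 1)

/-- Lucas numbers: `L 0 = 2`, `L 1 = 1`, `L (n+2) = L (n+1) + L n`. -/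
def L : ℕ → ℕ
  | 0 => 2
  | 1 => 1
  | (n + 2) => L (n + 1) + L n

lemma f_add_two (k : ℕ) : f (k + 2) = f (k + 1) + f k := by
  simp [f, Nat.fib_add_two]
  omega

lemma L_eq (k : ℕ) : L (k + 2) = f (k + 2) + f k := by
  induction k using Nat.twoStepInduction with
  | zero => rfl
  | one => rfl
  | more k ih1 ih2 =>
    show L (k + 3) + L (k + 2) = _
    rw [ih1, ih2, f_add_two (k + 2), f_add_two k]
    ring

theorem lucas_fib_identity_two (n m : ℕ) (hn : 3 ≤ n) (hm : 8 ≤ m) :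
    L n ^ 2 * f (m - 6) + 2 * L n * f n * f (m - 7) + f n ^ 2 * f (m - 8) =
      f (n - 2) ^ 2 * f m + 2 * f (n - 2) * f (n - 3) * f (m - 2) +
        f (n - 3) ^ 2 * f (m - 4) := by
  obtain ⟨a, rfl⟩ : ∃ a, n = a + 3 := ⟨n - 3, by omega⟩
  obtain ⟨b, rfl⟩ : ∃ b, m = b + 8 := ⟨m - 8, by omega⟩
  rw [show a + 3 - 2 = a + 1 from by omega, show a + 3 - 3 = a from by omega,
    show b + 8 - 6 = b + 2 from by omega, show b + 8 - 7 = b + 1 from by omega,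
    show b + 8 - 8 = b from by omega, show b + 8 - 2 = b + 6 from by omega,
    show b + 8 - 4 = b + 4 from by omega,
    show a + 3 = a + 1 + 2 from rfl, L_eq (a + 1)]
  rw [show b + 8 = b + 6 + 2 from rfl, f_add_two (b + 6), show b + 6 + 1 = b + 5 + 2 from rfl,
    f_add_two (b + 5), show b + 5 + 1 = b + 4 + 2 from rfl, f_add_two (b + 4),
    show b + 4 + 1 = b + 3 + 2 from rfl, f_add_two (b + 3),
    show b + 3 + 1 = b + 2 + 2 from rfl, f_add_two (b + 2),
    show b + 2 + 1 = b + 1 + 2 from rfl, f_add_two (b + 1), f_add_two b,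
    f_add_two (a + 1), f_add_two a]
  ring
end

section
/- Let G be a Gibonacci sequence. For all natural numbers n ≥ 2 and all N with 1 ≤ N ≤ n−1, one has G_N · G_{n−N} + G_{N−1} · G_{n−N−1} = G_1 · G_{n−1} + G_0 · G_{n−2}. (In particular the left-hand side is independent of N.) -/
theorem gibonacci_aux (G : ℕ → ℤ)
    (hG : ∀ n, G (n + 2) = G (n + 1) + G n) :
    ∀ a b, G (a+1) * G (b+1) + G a * G b = G 1 * G (a+b+1) + G 0 * G (a+b) := by
  intro a
  induction a with
  | zero => intro b; simp
  | succ a ih =>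
    intro b
    have h1 : G (a+2) = G (a+1) + G a := hG a
    have h2 : G (b+2) = G (b+1) + G b := hG b
    have := ih (b+1)
    have harith : a + 1 + b = a + (b + 1) := by ring
    rw [show a+1+1 = a+2 from rfl, h1, harith]
    rw [show a + (b+1) + 1 = a + 1 + (b + 1) from by ring] at this ⊢
    rw [show b+1+1 = b+2 from rfl, hG b] at this
    linarith

theorem gibonacci_split_identity (G : ℕ → ℤ)
    (hG : ∀ n, G (n + 2) = G (n + 1) + G n)
    (n N : ℕ) (hn : 2 ≤ n) (hN1 : 1 ≤ N) (hN2 : N ≤ n - 1) :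
    G N * G (n - N) + G (N - 1) * G (n - N - 1) = G 1 * G (n - 1) + G 0 * G (n - 2) := by
  obtain ⟨a, rfl⟩ : ∃ a, N = a + 1 := ⟨N - 1, by omega⟩
  obtain ⟨b, rfl⟩ : ∃ b, n = a + 1 + (b + 1) := ⟨n - a - 2, by omega⟩
  have h1 : a + 1 + (b + 1) - (a + 1) = b + 1 := by omega
  have h2 : a + 1 + (b + 1) - (a + 1) - 1 = b := by omega
  have h3 : a + 1 - 1 = a := by omega
  have h4 : a + 1 + (b + 1) - 1 = a + b + 1 := by omega
  have h5 : a + 1 + (b + 1) - 2 = a + b := by omega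
  rw [h2, h1, h4, h5]
  simp only [Nat.add_sub_cancel]
  exact gibonacci_aux G hG a b
end

section
/- Let G be a Gibonacci sequence. For every natural number n ≥ 2, one has (G_1 − G_0) · Σ_{j=1}^{n−1} G_{2n−1−2j} + G_0 · Σ_{j=1}^{n−1} j · G_{2n−1−2j} + 2 · G_0 · G_1 + G_0^2 · (n−2) = G_1 · G_{2n−2} + G_0 · G_{2n−3}. -/
lemma icc_split_bot (f : ℕ → ℤ) (n : ℕ) (hn : 1 ≤ n) :
    ∑ j ∈ Finset.Icc 1 n, f j = f 1 + ∑ j ∈ Finset.Icc 1 (n - 1), f (j + 1) := by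
  obtain ⟨m, rfl⟩ := Nat.exists_eq_add_of_le hn
  rw [← Finset.Ico_add_one_right_eq_Icc, ← Finset.Ico_add_one_right_eq_Icc,
    Finset.sum_Ico_eq_sum_range, Finset.sum_Ico_eq_sum_range]
  have h1 : 1 + m + 1 - 1 = m + 1 := by omega
  have h2 : (1 + m - 1) + 1 - 1 = m := by omega
  rw [h1, h2, Finset.sum_range_succ', add_comm]
  norm_num [Nat.add_assoc]

lemma sumOdd (G : ℕ → ℤ) (hG : ∀ n, G (n + 2) = G (n + 1) + G n) :
    ∀ n, 2 ≤ n → ∑ j ∈ Finset.Icc 1 (n - 1), G (2 * n - 1 - 2 * j) = G (2 * n - 2) - G 0 := by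
  intro n hn
  induction n, hn using Nat.le_induction with
  | base => simp [hG 0]
  | succ n hn ih =>
    have h1 : n + 1 - 1 = n := by omega
    rw [h1, icc_split_bot (fun j => G (2 * (n + 1) - 1 - 2 * j)) n (by omega)]
    have h2 : 2 * (n + 1) - 1 - 2 * 1 = 2 * n - 1 := by omega
    have h3 : ∑ j ∈ Finset.Icc 1 (n - 1), G (2 * (n + 1) - 1 - 2 * (j + 1)) =
        ∑ j ∈ Finset.Icc 1 (n - 1), G (2 * n - 1 - 2 * j) := by
      apply Finset.sum_congr rfl
      intro j hj
      simp only [Finset.mem_Icc] at hj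
      congr 1
      omega
    simp only [h2, h3, ih]
    have h4 : 2 * (n + 1) - 2 = (2 * n - 2) + 1 + 1 := by omega
    have h5 : 2 * n - 1 = (2 * n - 2) + 1 := by omega
    rw [h4, h5, hG (2 * n - 2)]
    ring

theorem gibonacci_second_vertical_odd (G : ℕ → ℤ)
    (hG : ∀ n, G (n + 2) = G (n + 1) + G n) (n : ℕ) (hn : 2 ≤ n) :
    (G 1 - G 0) * (∑ j ∈ Finset.Icc 1 (n - 1), G (2 * n - 1 - 2 * j)) +
      G 0 * (∑ j ∈ Finset.Icc 1 (n - 1), (j : ℤ) * G (2 * n - 1 - 2 * j)) +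
      2 * G 0 * G 1 + G 0 ^ 2 * ((n : ℤ) - 2) =
    G 1 * G (2 * n - 2) + G 0 * G (2 * n - 3) := by
  induction n, hn using Nat.le_induction with
  | base => simp [hG 0]; ring
  | succ n hn ih =>
    have h1 : n + 1 - 1 = n := by omega
    rw [h1,
      icc_split_bot (fun j => G (2 * (n + 1) - 1 - 2 * j)) n (by omega),
      icc_split_bot (fun j => (j : ℤ) * G (2 * (n + 1) - 1 - 2 * j)) n (by omega)]
    have h2 : 2 * (n + 1) - 1 - 2 * 1 = 2 * n - 1 := by omega
    have h3 : ∑ j ∈ Finset.Icc 1 (n - 1), G (2 * (n + 1) - 1 - 2 * (j + 1)) =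
        ∑ j ∈ Finset.Icc 1 (n - 1), G (2 * n - 1 - 2 * j) := by
      apply Finset.sum_congr rfl; intro j hj; congr 1; omega
    have h4 : ∑ j ∈ Finset.Icc 1 (n - 1), ((j : ℤ) + 1) * G (2 * (n + 1) - 1 - 2 * (j + 1)) =
        (∑ j ∈ Finset.Icc 1 (n - 1), (j : ℤ) * G (2 * n - 1 - 2 * j)) +
        ∑ j ∈ Finset.Icc 1 (n - 1), G (2 * n - 1 - 2 * j) := by
      rw [← Finset.sum_add_distrib]
      apply Finset.sum_congr rfl
      intro j hj
      have : 2 * (n + 1) - 1 - 2 * (j + 1) = 2 * n - 1 - 2 * j := by omega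
      rw [this]; ring
    simp only [Nat.cast_add, Nat.cast_one] at h4 ⊢
    push_cast at h4 ⊢
    rw [h2, h3]
    have h4' : ∑ j ∈ Finset.Icc 1 (n - 1), ((j : ℤ) + 1) * G (2 * n - 1 - 2 * j) =
        (∑ j ∈ Finset.Icc 1 (n - 1), (j : ℤ) * G (2 * n - 1 - 2 * j)) +
        ∑ j ∈ Finset.Icc 1 (n - 1), G (2 * n - 1 - 2 * j) := by
      rw [← Finset.sum_add_distrib]
      apply Finset.sum_congr rfl; intro j hj; ring
    rw [h4, sumOdd G hG n hn] at *
    have r1 : G (2 * (n + 1) - 2) = G (2 * n - 1) + G (2 * n - 2) := by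
      have e1 : 2 * (n + 1) - 2 = 2 * n - 2 + 1 + 1 := by omega
      rw [e1, hG]
      congr 2 <;> omega
    have r2 : G (2 * n - 1) = G (2 * n - 2) + G (2 * n - 3) := by
      have e3 : 2 * n - 1 = 2 * n - 3 + 1 + 1 := by omega
      rw [e3, hG]
      congr 2 <;> omega
    have e2 : 2 * (n + 1) - 3 = 2 * n - 1 := by omega
    rw [e2, r1]
    linear_combination ih - G 0 * r2
end

section
/- Let G be a Gibonacci sequence. For every natural number n ≥ 2, one has (G_1 − G_0) · Σ_{j=1}^{n−1} G_{2n−2j} + G_0 · Σ_{j=1}^{n−1} j · G_{2n−2j} + G_0^2 + (G_1 + (n−1) · G_0) · G_1 = G_1 · G_{2n−1} + G_0 · G_{2n−2}. -/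
open Finset

lemma gib_sumA (G : ℕ → ℤ) (hG : ∀ n, G (n + 2) = G (n + 1) + G n) :
    ∀ m : ℕ, ∑ k ∈ Icc 1 m, G (2 * k) = G (2 * m + 1) - G 1 := by
  intro m
  induction m with
  | zero => simp
  | succ m ih =>
    rw [Finset.sum_Icc_succ_top (by omega), ih,
      show 2 * (m + 1) = 2 * m + 2 from by ring,
      show 2 * m + 2 + 1 = (2 * m + 1) + 2 from by ring, hG (2 * m + 1),
      show 2 * m + 1 + 1 = 2 * m + 2 from rfl]
    ring

lemma gib_sumB (G : ℕ → ℤ) (hG : ∀ n, G (n + 2) = G (n + 1) + G n) :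
    ∀ m : ℕ, ∑ k ∈ Icc 1 m, (k : ℤ) * G (2 * k) =
      (m : ℤ) * G (2 * m + 1) - G (2 * m) + G 0 := by
  intro m
  induction m with
  | zero => simp
  | succ m ih =>
    rw [Finset.sum_Icc_succ_top (by omega), ih,
      show 2 * (m + 1) = 2 * m + 2 from by ring,
      show 2 * m + 2 + 1 = (2 * m + 1) + 2 from by ring, hG (2 * m + 1),
      hG (2 * m)]
    push_cast
    ring

theorem gibonacci_second_vertical_even (G : ℕ → ℤ)
    (hG : ∀ n, G (n + 2) = G (n + 1) + G n) (n : ℕ) (hn : 2 ≤ n) :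
    (G 1 - G 0) * (∑ j ∈ Finset.Icc 1 (n - 1), G (2 * n - 2 * j)) +
      G 0 * (∑ j ∈ Finset.Icc 1 (n - 1), (j : ℤ) * G (2 * n - 2 * j)) +
      G 0 ^ 2 + (G 1 + ((n : ℤ) - 1) * G 0) * G 1 =
    G 1 * G (2 * n - 1) + G 0 * G (2 * n - 2) := by
  have key1 : ∑ j ∈ Icc 1 (n - 1), G (2 * n - 2 * j) = ∑ k ∈ Icc 1 (n - 1), G (2 * k) := by
    refine Finset.sum_nbij' (fun j => n - j) (fun k => n - k) ?_ ?_ ?_ ?_ ?_ <;>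
      intro a ha <;> simp only [Finset.mem_Icc] at *
    · omega
    · omega
    · omega
    · omega
    · congr 1; omega
  have key2 : ∑ j ∈ Icc 1 (n - 1), (j : ℤ) * G (2 * n - 2 * j)
      = ∑ k ∈ Icc 1 (n - 1), ((n : ℤ) - (k : ℤ)) * G (2 * k) := by
    refine Finset.sum_nbij' (fun j => n - j) (fun k => n - k) ?_ ?_ ?_ ?_ ?_ <;>
      intro a ha <;> simp only [Finset.mem_Icc] at *
    · omega
    · omega
    · omega
    · omega
    · have h1 : 2 * n - 2 * a = 2 * (n - a) := by omega
      have h2 : ((n : ℤ) - ((n - a : ℕ) : ℤ)) = (a : ℤ) := by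
        have : ((n - a : ℕ) : ℤ) = (n : ℤ) - (a : ℤ) := by
          push_cast [Nat.cast_sub (by omega : a ≤ n)]; ring
        omega
      rw [h1, h2]
  have hsub : ∑ k ∈ Icc 1 (n - 1), ((n : ℤ) - (k : ℤ)) * G (2 * k)
      = (n : ℤ) * (∑ k ∈ Icc 1 (n - 1), G (2 * k)) - ∑ k ∈ Icc 1 (n - 1), (k : ℤ) * G (2 * k) := by
    simp only [sub_mul, Finset.sum_sub_distrib, Finset.mul_sum]
  rw [key1, key2, hsub, gib_sumA G hG, gib_sumB G hG,
    show 2 * (n - 1) + 1 = 2 * n - 1 from by omega,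
    show 2 * (n - 1) = 2 * n - 2 from by omega,
    show ((n - 1 : ℕ) : ℤ) = (n : ℤ) - 1 from by push_cast [Nat.cast_sub (by omega : 1 ≤ n)]; ring]
  ring
end

section
/- Let G be a Gibonacci sequence and let p ≥ 2 and m ≥ 4 be natural numbers. Then Σ_{k=p, k ≡ p (mod 2)}^{m−1} ( G_1 · C((k+p−4)/2, p−2) + G_0 · C((k+p−4)/2, p−1) ) · G_{m−k} + ε · ( G_1 · C((m+p−4)/2, p−2) + G_0 · C((m+p−4)/2, p−1) ) · G_1 + Σ_{t=0, t ≡ m (mod 2)}^{p−1} ( G_1^2 · C((m+t−4)/2, t−2) + 2 · G_0 · G_1 · C((m+t−4)/2, t−1) + G_0^2 · C((m+t−4)/2, t) ) = G_1 · G_{m−1} + G_0 · G_{m−2}, where ε = 1 if m ≡ p (mod 2) and ε = 0 otherwise. -/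
/-- Binomial coefficient `C a b` with an integer lower index, with the
convention that it vanishes for negative lower index. -/
def C (a : ℕ) (b : ℤ) : ℤ := if 0 ≤ b then (a.choose b.toNat : ℤ) else 0


lemma C_neg {a : ℕ} {b : ℤ} (h : b < 0) : C a b = 0 := by
  simp [C, not_le.2 h]

lemma C_vanish {a : ℕ} {b : ℤ} (h : (a : ℤ) < b) : C a b = 0 := by
  unfold C
  split
  · exact_mod_cast Nat.choose_eq_zero_of_lt (by omega)
  · rfl

lemma C_pascal (n : ℕ) (r : ℤ) : C (n + 1) r = C n r + C n (r - 1) := by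
  rcases lt_trichotomy r 0 with h | h | h
  · rw [C_neg h, C_neg h, C_neg (by omega)]; ring
  · subst h; norm_num [C]
  · obtain ⟨s, rfl⟩ : ∃ s : ℕ, r = (s : ℤ) + 1 := ⟨(r - 1).toNat, by omega⟩
    have h1 : ((s:ℤ) + 1).toNat = s + 1 := by omega
    have h2 : ((s:ℤ) + 1 - 1).toNat = s := by omega
    unfold C
    rw [if_pos (by omega), if_pos (by omega), if_pos (by omega), h1, h2]
    rw [Nat.choose_succ_succ]
    push_cast; ring

def W (G : ℕ → ℤ) (p k : ℕ) : ℤ :=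
  G 1 * C ((k + p - 4) / 2) ((p : ℤ) - 2) + G 0 * C ((k + p - 4) / 2) ((p : ℤ) - 1)

def T (G : ℕ → ℤ) (m t : ℕ) : ℤ :=
  G 1 ^ 2 * C ((m + t - 4) / 2) ((t : ℤ) - 2) +
    2 * G 0 * G 1 * C ((m + t - 4) / 2) ((t : ℤ) - 1) +
    G 0 ^ 2 * C ((m + t - 4) / 2) (t : ℤ)

def U (G : ℕ → ℤ) (m t : ℕ) : ℤ :=
  G 1 ^ 2 * C ((m + t - 5) / 2) ((t : ℤ) - 3) +
    2 * G 0 * G 1 * C ((m + t - 5) / 2) ((t : ℤ) - 2) +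
    G 0 ^ 2 * C ((m + t - 5) / 2) ((t : ℤ) - 1)

def D (G : ℕ → ℤ) (p m : ℕ) : ℤ :=
  (∑ k ∈ Finset.Icc p (m - 1), if k % 2 = p % 2 then W G p k * G (m - k) else 0) +
    (if m % 2 = p % 2 then W G p m * G 1 else 0) +
    (∑ t ∈ Finset.range p, if t % 2 = m % 2 then T G m t else 0)

lemma W_vanish (G : ℕ → ℤ) {p k : ℕ} (h : (k + p - 4) / 2 + 2 < p) : W G p k = 0 := by
  unfold W
  have h1 : C ((k + p - 4) / 2) ((p:ℤ) - 2) = 0 := C_vanish (by omega)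
  have h2 : C ((k + p - 4) / 2) ((p:ℤ) - 1) = 0 := C_vanish (by omega)
  rw [h1, h2]; ring

lemma T_vanish (G : ℕ → ℤ) {m t : ℕ} (h : (m + t - 4) / 2 + 2 < t) : T G m t = 0 := by
  unfold T
  have h1 : C ((m + t - 4) / 2) ((t:ℤ) - 2) = 0 := C_vanish (by omega)
  have h2 : C ((m + t - 4) / 2) ((t:ℤ) - 1) = 0 := C_vanish (by omega)
  have h3 : C ((m + t - 4) / 2) ((t:ℤ)) = 0 := C_vanish (by omega)
  rw [h1, h2, h3]; ring

lemma U_zero (G : ℕ → ℤ) (m : ℕ) : U G m 0 = 0 := by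
  unfold U
  rw [C_neg (by norm_num), C_neg (by norm_num), C_neg (by norm_num)]
  ring

lemma T_split (G : ℕ → ℤ) (m' t : ℕ) (h3 : 3 ≤ m') :
    T G (m' + 3) t = T G (m' + 1) t + U G (m' + 2) t := by
  unfold T U
  have e1 : (m' + 3 + t - 4) / 2 = (m' + 1 + t - 4) / 2 + 1 := by omega
  have e2 : (m' + 2 + t - 5) / 2 = (m' + 1 + t - 4) / 2 := by omega
  rw [e1, e2, C_pascal, C_pascal, C_pascal,
    show (t:ℤ) - 2 - 1 = (t:ℤ) - 3 by ring,
    show (t:ℤ) - 1 - 1 = (t:ℤ) - 2 by ring]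
  ring

lemma U_succ (G : ℕ → ℤ) (m' i : ℕ) :
    U G (m' + 2) (i + 1) = T G (m' + 2) i := by
  unfold T U
  have e1 : (m' + 2 + (i + 1) - 5) / 2 = (m' + 2 + i - 4) / 2 := by omega
  rw [e1, show ((i:ℕ) + 1 : ℕ) = (i+1 : ℕ) from rfl]
  push_cast
  rw [show (i:ℤ) + 1 - 3 = (i:ℤ) - 2 by ring, show (i:ℤ) + 1 - 2 = (i:ℤ) - 1 by ring,
    show (i:ℤ) + 1 - 1 = (i:ℤ) by ring]

lemma key (G : ℕ → ℤ) (p m' : ℕ) (hp : 1 ≤ p) (h3 : 3 ≤ m' + p) :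
    W G p (m' + 3) * G 1 + W G p (m' + 1) * G 0
      = W G p (m' + 1) * G 1 + T G (m' + 2) (p - 1) := by
  unfold W T
  have e1 : (m' + 3 + p - 4) / 2 = (m' + 1 + p - 4) / 2 + 1 := by omega
  have e3 : (m' + 2 + (p - 1) - 4) / 2 = (m' + 1 + p - 4) / 2 := by omega
  have c1 : ((p - 1 : ℕ) : ℤ) = (p : ℤ) - 1 := by omega
  rw [e1, e3, c1, C_pascal, C_pascal,
    show (p:ℤ) - 2 - 1 = (p:ℤ) - 1 - 2 by ring,
    show (p:ℤ) - 1 - 1 = (p:ℤ) - 2 by ring]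
  ring

lemma hS2_lemma (G : ℕ → ℤ) (p m' : ℕ) (hp : 2 ≤ p) (hm : 3 ≤ m') :
    (∑ t ∈ Finset.range p, if t % 2 = (m' + 3) % 2 then T G (m' + 3) t else 0)
      + (if (p - 1) % 2 = (m' + 2) % 2 then T G (m' + 2) (p - 1) else 0)
    = (∑ t ∈ Finset.range p, if t % 2 = (m' + 1) % 2 then T G (m' + 1) t else 0)
      + (∑ t ∈ Finset.range p, if t % 2 = (m' + 2) % 2 then T G (m' + 2) t else 0) := by
  obtain ⟨q, rfl⟩ : ∃ q, p = q + 1 := ⟨p - 1, by omega⟩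
  have hpar : (m' + 3) % 2 = (m' + 1) % 2 := by omega
  have hsplit : (∑ t ∈ Finset.range (q + 1), if t % 2 = (m' + 3) % 2 then T G (m' + 3) t else 0)
      = (∑ t ∈ Finset.range (q + 1), if t % 2 = (m' + 1) % 2 then T G (m' + 1) t else 0)
        + (∑ t ∈ Finset.range (q + 1), if t % 2 = (m' + 1) % 2 then U G (m' + 2) t else 0) := by
    rw [← Finset.sum_add_distrib]
    refine Finset.sum_congr rfl fun t _ => ?_
    rw [hpar, T_split G m' t hm]
    split <;> ring
  rw [hsplit]
  have hU : (∑ t ∈ Finset.range (q + 1), if t % 2 = (m' + 1) % 2 then U G (m' + 2) t else 0)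
      = (∑ i ∈ Finset.range q, if i % 2 = (m' + 2) % 2 then T G (m' + 2) i else 0) := by
    rw [Finset.sum_range_succ']
    have h0 : (if 0 % 2 = (m' + 1) % 2 then U G (m' + 2) 0 else 0) = 0 := by
      rw [U_zero]; split <;> rfl
    rw [h0, add_zero]
    refine Finset.sum_congr rfl fun i _ => ?_
    rw [U_succ]
    exact if_congr (by omega) rfl rfl
  rw [hU]
  have hlast : (∑ i ∈ Finset.range (q + 1), if i % 2 = (m' + 2) % 2 then T G (m' + 2) i else 0)
      = (∑ i ∈ Finset.range q, if i % 2 = (m' + 2) % 2 then T G (m' + 2) i else 0)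
        + (if q % 2 = (m' + 2) % 2 then T G (m' + 2) q else 0) := Finset.sum_range_succ _ q
  have hq : q + 1 - 1 = q := rfl
  rw [hq, hlast]
  ring

lemma step (G : ℕ → ℤ) (hG : ∀ n, G (n + 2) = G (n + 1) + G n)
    (p m' : ℕ) (hp : 2 ≤ p) (hm : 3 ≤ m') :
    D G p (m' + 3) = D G p (m' + 2) + D G p (m' + 1) := by
  have hres : (if (m' + 3) % 2 = p % 2 then W G p (m' + 3) * G 1 else 0)
      + (if (m' + 1) % 2 = p % 2 then W G p (m' + 1) * G 0 else 0)
      = (if (m' + 1) % 2 = p % 2 then W G p (m' + 1) * G 1 else 0)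
        + (if (p - 1) % 2 = (m' + 2) % 2 then T G (m' + 2) (p - 1) else 0) := by
    by_cases hc : (m' + 1) % 2 = p % 2
    · rw [if_pos (by omega), if_pos hc, if_pos hc, if_pos (by omega)]
      exact key G p m' (by omega) (by omega)
    · rw [if_neg (by omega), if_neg hc, if_neg hc, if_neg (by omega)]
  have hS2 := hS2_lemma G p m' hp hm
  simp only [D, show m' + 3 - 1 = m' + 2 from rfl, show m' + 2 - 1 = m' + 1 from rfl,
    show m' + 1 - 1 = m' from rfl]
  by_cases hpm : p ≤ m' + 1
  · -- generic case
    have e1 : (∑ k ∈ Finset.Icc p (m' + 2), if k % 2 = p % 2 then W G p k * G (m' + 3 - k) else 0)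
        = (∑ k ∈ Finset.Icc p (m' + 1), if k % 2 = p % 2 then W G p k * G (m' + 3 - k) else 0)
          + (if (m' + 2) % 2 = p % 2 then W G p (m' + 2) * G 1 else 0) := by
      rw [Finset.sum_Icc_succ_top (by omega : p ≤ (m' + 1) + 1)]
      rw [show m' + 3 - (m' + 2) = 1 from by omega]
    have e2 : (∑ k ∈ Finset.Icc p (m' + 1), if k % 2 = p % 2 then W G p k * G (m' + 3 - k) else 0)
        = (∑ k ∈ Finset.Icc p (m' + 1), if k % 2 = p % 2 then W G p k * G (m' + 2 - k) else 0)
          + (∑ k ∈ Finset.Icc p (m' + 1), if k % 2 = p % 2 then W G p k * G (m' + 1 - k) else 0) := by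
      rw [← Finset.sum_add_distrib]
      refine Finset.sum_congr rfl fun k hk => ?_
      have hk' : k ≤ m' + 1 := (Finset.mem_Icc.mp hk).2
      have hGk : G (m' + 3 - k) = G (m' + 2 - k) + G (m' + 1 - k) := by
        have := hG (m' + 1 - k)
        rw [show m' + 1 - k + 2 = m' + 3 - k from by omega,
          show m' + 1 - k + 1 = m' + 2 - k from by omega] at this
        exact this
      rw [hGk]
      split <;> ring
    have e3 : (∑ k ∈ Finset.Icc p (m' + 1), if k % 2 = p % 2 then W G p k * G (m' + 1 - k) else 0)
        = (∑ k ∈ Finset.Icc p m', if k % 2 = p % 2 then W G p k * G (m' + 1 - k) else 0)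
          + (if (m' + 1) % 2 = p % 2 then W G p (m' + 1) * G 0 else 0) := by
      rw [Finset.sum_Icc_succ_top (by omega : p ≤ m' + 1)]
      rw [show m' + 1 - (m' + 1) = 0 from by omega]
    linear_combination e1 + e2 + e3 + hres + hS2
  · -- p ≥ m' + 2
    have hempty1 : Finset.Icc p (m' + 1) = ∅ := Finset.Icc_eq_empty (by omega)
    have hempty0 : Finset.Icc p m' = ∅ := Finset.Icc_eq_empty (by omega)
    have hiteW0 : (if (m' + 1) % 2 = p % 2 then W G p (m' + 1) * G 0 else 0) = 0 := by
      by_cases hc : (m' + 1) % 2 = p % 2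
      · rw [if_pos hc, W_vanish G (by omega)]; ring
      · rw [if_neg hc]
    have hfs3 : (∑ k ∈ Finset.Icc p (m' + 2), if k % 2 = p % 2 then W G p k * G (m' + 3 - k) else 0)
        = (if (m' + 2) % 2 = p % 2 then W G p (m' + 2) * G 1 else 0) := by
      by_cases hc : p = m' + 2
      · subst hc
        rw [Finset.Icc_self, Finset.sum_singleton,
          show m' + 3 - (m' + 2) = 1 from by omega]
      · have : Finset.Icc p (m' + 2) = ∅ := Finset.Icc_eq_empty (by omega)
        rw [this, Finset.sum_empty]
        by_cases hc2 : (m' + 2) % 2 = p % 2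
        · rw [if_pos hc2, W_vanish G (by omega)]; ring
        · rw [if_neg hc2]
    rw [hempty1, hempty0, Finset.sum_empty, hfs3]
    linear_combination hres + hS2 - hiteW0

lemma base4 (G : ℕ → ℤ) (hG : ∀ n, G (n + 2) = G (n + 1) + G n) (p : ℕ) (hp : 2 ≤ p) :
    D G p 4 = G 1 * G 3 + G 0 * G 2 := by
  have h2 : G 2 = G 1 + G 0 := hG 0
  have h3 : G 3 = G 2 + G 1 := hG 1
  unfold D
  rcases Nat.lt_or_ge p 5 with h | h
  · interval_cases p
    · norm_num [show Finset.Icc 2 3 = {2, 3} from by decide, Finset.sum_insert,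
        Finset.sum_singleton, Finset.sum_range_succ, W, T, C, show Int.toNat 2 = 2 from rfl, show Int.toNat 3 = 3 from rfl, show Int.toNat 4 = 4 from rfl, show Nat.choose 1 2 = 0 from by decide, show Nat.choose 2 2 = 1 from by decide, show Nat.choose 2 3 = 0 from by decide, show Nat.choose 2 4 = 0 from by decide, show Nat.choose 3 3 = 1 from by decide, show Nat.choose 3 4 = 0 from by decide, show Nat.choose 3 5 = 0 from by decide]
      rw [h3, h2]; ring
    · norm_num [show Finset.Icc 3 3 = {3} from by decide,
        Finset.sum_singleton, Finset.sum_range_succ, W, T, C, show Int.toNat 2 = 2 from rfl, show Int.toNat 3 = 3 from rfl, show Int.toNat 4 = 4 from rfl, show Nat.choose 1 2 = 0 from by decide, show Nat.choose 2 2 = 1 from by decide, show Nat.choose 2 3 = 0 from by decide, show Nat.choose 2 4 = 0 from by decide, show Nat.choose 3 3 = 1 from by decide, show Nat.choose 3 4 = 0 from by decide, show Nat.choose 3 5 = 0 from by decide]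
      rw [h3, h2]; ring
    · norm_num [show Finset.Icc 4 3 = ∅ from by decide,
        Finset.sum_range_succ, W, T, C, show Int.toNat 2 = 2 from rfl, show Int.toNat 3 = 3 from rfl, show Int.toNat 4 = 4 from rfl, show Nat.choose 1 2 = 0 from by decide, show Nat.choose 2 2 = 1 from by decide, show Nat.choose 2 3 = 0 from by decide, show Nat.choose 2 4 = 0 from by decide, show Nat.choose 3 3 = 1 from by decide, show Nat.choose 3 4 = 0 from by decide, show Nat.choose 3 5 = 0 from by decide]
      rw [h3, h2]; ring
  · have hIcc : Finset.Icc p (4 - 1) = ∅ := Finset.Icc_eq_empty (by omega)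
    have hε : (if 4 % 2 = p % 2 then W G p 4 * G 1 else 0) = 0 := by
      by_cases hc : 4 % 2 = p % 2
      · rw [if_pos hc, W_vanish G (by omega)]; ring
      · rw [if_neg hc]
    have hS2 : (∑ t ∈ Finset.range p, if t % 2 = 4 % 2 then T G 4 t else 0)
        = (∑ t ∈ Finset.range 5, if t % 2 = 4 % 2 then T G 4 t else 0) := by
      refine (Finset.sum_subset (Finset.range_subset_range.2 (by omega)) ?_).symm
      intro t ht hnt
      simp only [Finset.mem_range] at ht hnt
      by_cases hc : t % 2 = 4 % 2
      · rw [if_pos hc, T_vanish G (by omega)]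
      · rw [if_neg hc]
    rw [hIcc, Finset.sum_empty, hε, hS2]
    norm_num [Finset.sum_range_succ, T, C, show Nat.choose 2 4 = 0 from by decide,
      show Nat.choose 2 (Int.toNat 2) = 1 from by decide]
    rw [h3, h2]; ring

lemma base5 (G : ℕ → ℤ) (hG : ∀ n, G (n + 2) = G (n + 1) + G n) (p : ℕ) (hp : 2 ≤ p) :
    D G p 5 = G 1 * G 4 + G 0 * G 3 := by
  have h2 : G 2 = G 1 + G 0 := hG 0
  have h3 : G 3 = G 2 + G 1 := hG 1
  have h4 : G 4 = G 3 + G 2 := hG 2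
  unfold D
  rcases Nat.lt_or_ge p 6 with h | h
  · interval_cases p
    · norm_num [show Finset.Icc 2 4 = {2, 3, 4} from by decide, Finset.sum_insert,
        Finset.sum_singleton, Finset.sum_range_succ, W, T, C, show Int.toNat 2 = 2 from rfl, show Int.toNat 3 = 3 from rfl, show Int.toNat 4 = 4 from rfl, show Nat.choose 1 2 = 0 from by decide, show Nat.choose 2 2 = 1 from by decide, show Nat.choose 2 3 = 0 from by decide, show Nat.choose 2 4 = 0 from by decide, show Nat.choose 3 3 = 1 from by decide, show Nat.choose 3 4 = 0 from by decide, show Nat.choose 3 5 = 0 from by decide]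
      rw [h4, h3, h2]; ring
    · norm_num [show Finset.Icc 3 4 = {3, 4} from by decide, Finset.sum_insert,
        Finset.sum_singleton, Finset.sum_range_succ, W, T, C, show Int.toNat 2 = 2 from rfl, show Int.toNat 3 = 3 from rfl, show Int.toNat 4 = 4 from rfl, show Nat.choose 1 2 = 0 from by decide, show Nat.choose 2 2 = 1 from by decide, show Nat.choose 2 3 = 0 from by decide, show Nat.choose 2 4 = 0 from by decide, show Nat.choose 3 3 = 1 from by decide, show Nat.choose 3 4 = 0 from by decide, show Nat.choose 3 5 = 0 from by decide]
      rw [h4, h3, h2]; ring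
    · norm_num [show Finset.Icc 4 4 = {4} from by decide,
        Finset.sum_singleton, Finset.sum_range_succ, W, T, C, show Int.toNat 2 = 2 from rfl, show Int.toNat 3 = 3 from rfl, show Int.toNat 4 = 4 from rfl, show Nat.choose 1 2 = 0 from by decide, show Nat.choose 2 2 = 1 from by decide, show Nat.choose 2 3 = 0 from by decide, show Nat.choose 2 4 = 0 from by decide, show Nat.choose 3 3 = 1 from by decide, show Nat.choose 3 4 = 0 from by decide, show Nat.choose 3 5 = 0 from by decide]
      rw [h4, h3, h2]; ring
    · norm_num [show Finset.Icc 5 4 = ∅ from by decide,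
        Finset.sum_range_succ, W, T, C, show Int.toNat 2 = 2 from rfl, show Int.toNat 3 = 3 from rfl, show Int.toNat 4 = 4 from rfl, show Nat.choose 1 2 = 0 from by decide, show Nat.choose 2 2 = 1 from by decide, show Nat.choose 2 3 = 0 from by decide, show Nat.choose 2 4 = 0 from by decide, show Nat.choose 3 3 = 1 from by decide, show Nat.choose 3 4 = 0 from by decide, show Nat.choose 3 5 = 0 from by decide]
      rw [h4, h3, h2]; ring
  · have hIcc : Finset.Icc p (5 - 1) = ∅ := Finset.Icc_eq_empty (by omega)
    have hε : (if 5 % 2 = p % 2 then W G p 5 * G 1 else 0) = 0 := by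
      by_cases hc : 5 % 2 = p % 2
      · rw [if_pos hc, W_vanish G (by omega)]; ring
      · rw [if_neg hc]
    have hS2 : (∑ t ∈ Finset.range p, if t % 2 = 5 % 2 then T G 5 t else 0)
        = (∑ t ∈ Finset.range 6, if t % 2 = 5 % 2 then T G 5 t else 0) := by
      refine (Finset.sum_subset (Finset.range_subset_range.2 (by omega)) ?_).symm
      intro t ht hnt
      simp only [Finset.mem_range] at ht hnt
      by_cases hc : t % 2 = 5 % 2
      · rw [if_pos hc, T_vanish G (by omega)]
      · rw [if_neg hc]
    rw [hIcc, Finset.sum_empty, hε, hS2]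
    norm_num [Finset.sum_range_succ, T, C, show Nat.choose 3 5 = 0 from by decide,
      show Nat.choose 3 (Int.toNat 3) = 1 from by decide]
    rw [h4, h3, h2]; ring

lemma D_eq (G : ℕ → ℤ) (hG : ∀ n, G (n + 2) = G (n + 1) + G n)
    (p : ℕ) (hp : 2 ≤ p) : ∀ m, 4 ≤ m → D G p m = G 1 * G (m - 1) + G 0 * G (m - 2) := by
  intro m
  induction m using Nat.strong_induction_on with
  | _ m ih =>
    intro hm
    by_cases h4 : m = 4
    · subst h4; exact base4 G hG p hp
    by_cases h5 : m = 5
    · subst h5; exact base5 G hG p hp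
    obtain ⟨n, rfl⟩ : ∃ n, m = n + 6 := ⟨m - 6, by omega⟩
    have e := step G hG p (n + 3) hp (by omega)
    rw [show n + 3 + 3 = n + 6 from by omega, show n + 3 + 2 = n + 5 from by omega,
      show n + 3 + 1 = n + 4 from by omega] at e
    rw [e, ih (n + 5) (by omega) (by omega), ih (n + 4) (by omega) (by omega)]
    rw [show n + 6 - 1 = n + 5 from by omega, show n + 6 - 2 = n + 4 from by omega,
      show n + 5 - 1 = n + 4 from by omega, show n + 5 - 2 = n + 3 from by omega,
      show n + 4 - 1 = n + 3 from by omega, show n + 4 - 2 = n + 2 from by omega]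
    have g1 := hG (n + 3)
    have g2 := hG (n + 2)
    rw [show n + 3 + 2 = n + 5 from by omega, show n + 3 + 1 = n + 4 from by omega] at g1
    rw [show n + 2 + 2 = n + 4 from by omega, show n + 2 + 1 = n + 3 from by omega] at g2
    rw [g1, g2]; ring

theorem gibonacci_pth_vertical (G : ℕ → ℤ)
    (hG : ∀ n, G (n + 2) = G (n + 1) + G n)
    (p m : ℕ) (hp : 2 ≤ p) (hm : 4 ≤ m) :
    (∑ k ∈ (Finset.Icc p (m - 1)).filter (fun k => k % 2 = p % 2),
        (G 1 * C ((k + p - 4) / 2) ((p : ℤ) - 2) +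
          G 0 * C ((k + p - 4) / 2) ((p : ℤ) - 1)) * G (m - k)) +
      (if m % 2 = p % 2 then
        (G 1 * C ((m + p - 4) / 2) ((p : ℤ) - 2) +
          G 0 * C ((m + p - 4) / 2) ((p : ℤ) - 1)) * G 1
      else 0) +
      (∑ t ∈ (Finset.range p).filter (fun t => t % 2 = m % 2),
        (G 1 ^ 2 * C ((m + t - 4) / 2) ((t : ℤ) - 2) +
          2 * G 0 * G 1 * C ((m + t - 4) / 2) ((t : ℤ) - 1) +
          G 0 ^ 2 * C ((m + t - 4) / 2) (t : ℤ))) =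
    G 1 * G (m - 1) + G 0 * G (m - 2) := by

  have h := D_eq G hG p hp m hm
  simp only [D, W, T] at h
  rw [Finset.sum_filter, Finset.sum_filter]
  exact h
end

section
/- Let G be a Gibonacci sequence. For every natural number n ≥ 1, one has Σ_{j=1}^{⌊(n−1)/2⌋} f_{n−2j} · ( G_1 + (j−1) · G_0 ) + G_1 + ⌊n/2⌋ · G_0 = G_n. -/
lemma sumI (m : ℕ) : (∑ i ∈ Finset.range (m / 2), f (m - 1 - 2 * i)) + 1 = Nat.fib (m + 1) := by
  induction m using Nat.twoStepInduction with
  | zero => simp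
  | one => simp
  | more m ih _ =>
    have h2 : (m + 2) / 2 = m / 2 + 1 := by omega
    rw [h2, Finset.sum_range_succ']
    have hcongr : ∀ i ∈ Finset.range (m / 2),
        f (m + 2 - 1 - 2 * (i + 1)) = f (m - 1 - 2 * i) := by
      intro i hi
      congr 1
      omega
    rw [Finset.sum_congr rfl hcongr]
    have hf : f (m + 2 - 1 - 2 * 0) = Nat.fib (m + 2) := rfl
    have hfib : Nat.fib (m + 2 + 1) = Nat.fib (m + 1) + Nat.fib (m + 2) := Nat.fib_add_two
    omega

lemma sumII (m : ℕ) :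
    (∑ i ∈ Finset.range (m / 2), i * f (m - 1 - 2 * i)) + (m + 1) / 2 = Nat.fib m := by
  induction m using Nat.twoStepInduction with
  | zero => simp
  | one => simp
  | more m ih _ =>
    have h2 : (m + 2) / 2 = m / 2 + 1 := by omega
    rw [h2, Finset.sum_range_succ']
    have hcongr : ∀ i ∈ Finset.range (m / 2),
        (i + 1) * f (m + 2 - 1 - 2 * (i + 1)) = i * f (m - 1 - 2 * i) + f (m - 1 - 2 * i) := by
      intro i hi
      have : m + 2 - 1 - 2 * (i + 1) = m - 1 - 2 * i := by omega
      rw [this]; ring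
    rw [Finset.sum_congr rfl hcongr, Finset.sum_add_distrib]
    have h1 := sumI m
    have hfib : Nat.fib (m + 2) = Nat.fib m + Nat.fib (m + 1) := Nat.fib_add_two
    have h0 : 0 * f (m + 2 - 1 - 2 * 0) = 0 := Nat.zero_mul _
    omega

lemma Gclosed (G : ℕ → ℤ) (hG : ∀ n, G (n + 2) = G (n + 1) + G n) (m : ℕ) :
    G (m + 1) = (Nat.fib m : ℤ) * G 0 + (Nat.fib (m + 1) : ℤ) * G 1 := by
  induction m using Nat.twoStepInduction with
  | zero => simp
  | one => rw [hG 0]; simp [Nat.fib_add_two]; ring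
  | more m ih1 ih2 =>
    rw [hG (m + 1), ih1, ih2]
    have h1 : Nat.fib (m + 1 + 1) = Nat.fib m + Nat.fib (m + 1) := Nat.fib_add_two
    have h2 : Nat.fib (m + 1 + 1 + 1) = Nat.fib (m + 1) + Nat.fib (m + 1 + 1) := Nat.fib_add_two
    push_cast [h1, h2]
    ring

theorem gibonacci_fib_sum (G : ℕ → ℤ)
    (hG : ∀ n, G (n + 2) = G (n + 1) + G n) (n : ℕ) (hn : 1 ≤ n) :
    (∑ j ∈ Finset.Icc 1 ((n - 1) / 2), (f (n - 2 * j) : ℤ) * (G 1 + ((j : ℤ) - 1) * G 0)) +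
      G 1 + ((n / 2 : ℕ) : ℤ) * G 0 = G n := by
  obtain ⟨m, rfl⟩ : ∃ m, n = m + 1 := ⟨n - 1, by omega⟩
  have hm1 : (m + 1 - 1) / 2 = m / 2 := rfl
  rw [hm1, ← Finset.Ico_add_one_right_eq_Icc, Finset.sum_Ico_eq_sum_range]
  have hcongr : ∀ i ∈ Finset.range (m / 2 + 1 - 1),
      (f (m + 1 - 2 * (1 + i)) : ℤ) * (G 1 + (((1 + i : ℕ) : ℤ) - 1) * G 0) =
      (f (m - 1 - 2 * i) : ℤ) * G 1 + ((i * f (m - 1 - 2 * i) : ℕ) : ℤ) * G 0 := by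
    intro i hi
    have : m + 1 - 2 * (1 + i) = m - 1 - 2 * i := by omega
    rw [this]
    push_cast
    ring
  rw [Finset.sum_congr rfl hcongr, Finset.sum_add_distrib, ← Finset.sum_mul, ← Finset.sum_mul]
  have h1 := sumI m
  have h2 := sumII m
  have h3 := Gclosed G hG m
  have hs : m / 2 + 1 - 1 = m / 2 := rfl
  rw [hs, h3]
  have c1 : ((∑ i ∈ Finset.range (m / 2), f (m - 1 - 2 * i) : ℕ) : ℤ) + 1 =
      (Nat.fib (m + 1) : ℤ) := by exact_mod_cast congrArg (Nat.cast : ℕ → ℤ) h1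
  have c2 : ((∑ i ∈ Finset.range (m / 2), i * f (m - 1 - 2 * i) : ℕ) : ℤ) +
      (((m + 1) / 2 : ℕ) : ℤ) = (Nat.fib m : ℤ) := by exact_mod_cast congrArg (Nat.cast : ℕ → ℤ) h2
  push_cast at c1 c2 ⊢
  linear_combination c1 * G 1 + c2 * G 0
end

section
/- Let G be a Gibonacci sequence. For every natural number n ≥ 1, one has Σ_{j=1}^{n−1} j · G_{2n−1−2j} + G_1 + (n−1) · G_0 = G_{2n−1}. -/
private lemma gib_aux1 (G : ℕ → ℤ) (hG : ∀ n, G (n + 2) = G (n + 1) + G n) :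
    ∀ m : ℕ, (∑ i ∈ Finset.range m, G (2 * i + 1)) = G (2 * m) - G 0 := by
  intro m
  induction m with
  | zero => simp
  | succ m ih =>
      rw [Finset.sum_range_succ, ih]
      have : 2 * (m + 1) = 2 * m + 1 + 1 := by ring
      rw [this, hG (2 * m)]
      ring

private lemma gib_aux2 (G : ℕ → ℤ) (hG : ∀ n, G (n + 2) = G (n + 1) + G n) :
    ∀ m : ℕ, (∑ i ∈ Finset.range m, ((m : ℤ) - i) * G (2 * i + 1)) + G 1 + (m : ℤ) * G 0
      = G (2 * m + 1) := by
  intro m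
  induction m with
  | zero => simp
  | succ m ih =>
      rw [Finset.sum_range_succ]
      have hsplit : (∑ i ∈ Finset.range m, (((m : ℤ) + 1) - i) * G (2 * i + 1))
          = (∑ i ∈ Finset.range m, ((m : ℤ) - i) * G (2 * i + 1))
            + ∑ i ∈ Finset.range m, G (2 * i + 1) := by
        rw [← Finset.sum_add_distrib]
        apply Finset.sum_congr rfl
        intro i _
        ring
      push_cast
      rw [hsplit, gib_aux1 G hG]
      have h2 : 2 * (m + 1) + 1 = 2 * m + 1 + 2 := by ring
      have h3 : 2 * (m + 1) = 2 * m + 2 := by ring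
      rw [h2, hG (2 * m + 1)]
      rw [h3] at *
      have := hG (2 * m)
      linarith [ih]

theorem gibonacci_weighted_sum_odd (G : ℕ → ℤ)
    (hG : ∀ n, G (n + 2) = G (n + 1) + G n) (n : ℕ) (hn : 1 ≤ n) :
    (∑ j ∈ Finset.Icc 1 (n - 1), (j : ℤ) * G (2 * n - 1 - 2 * j)) +
      G 1 + ((n : ℤ) - 1) * G 0 = G (2 * n - 1) := by
  obtain ⟨m, rfl⟩ : ∃ m, n = m + 1 := ⟨n - 1, by omega⟩
  have hsum : (∑ j ∈ Finset.Icc 1 (m + 1 - 1), (j : ℤ) * G (2 * (m + 1) - 1 - 2 * j))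
      = ∑ i ∈ Finset.range m, ((m : ℤ) - i) * G (2 * i + 1) := by
    rw [Nat.add_sub_cancel]
    apply Finset.sum_nbij' (fun j => m - j) (fun i => m - i)
    · intro j hj; simp only [Finset.mem_Icc] at hj; simp only [Finset.mem_range]; omega
    · intro i hi; simp only [Finset.mem_range] at hi; simp only [Finset.mem_Icc]; omega
    · intro j hj; simp only [Finset.mem_Icc] at hj; omega
    · intro i hi; simp only [Finset.mem_range] at hi; omega
    · intro j hj
      simp only [Finset.mem_Icc] at hj
      have h1 : 2 * (m - j) + 1 = 2 * (m + 1) - 1 - 2 * j := by omega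
      have h2 : ((m : ℤ) - ((m - j : ℕ) : ℤ)) = (j : ℤ) := by
        have : (m : ℕ) - j + j = m := by omega
        push_cast [Nat.cast_sub hj.2]
        ring
      rw [h1, h2]
  rw [hsum]
  have h3 : 2 * (m + 1) - 1 = 2 * m + 1 := by omega
  have h4 : ((m : ℤ) + 1) - 1 = (m : ℤ) := by ring
  rw [h3]
  push_cast
  rw [h4]
  exact gib_aux2 G hG m
end

section
/- Let G be a Gibonacci sequence and G′ its modified Gibonacci sequence. For all natural numbers n ≥ 2 and all N with 1 ≤ N ≤ n−1, one has G_N · G′_{n−N} + G_{N−1} · G′_{n−N−1} = G_0 · G_{n−1} + G_1 · G_{n−2}, and moreover G_0 · G_{n−1} + G_1 · G_{n−2} = G_1 · G′_{n−1} + G_0 · G′_{n−2}. -/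
private lemma gib_aux (G G' : ℕ → ℤ)
    (hG : ∀ n, G (n + 2) = G (n + 1) + G n)
    (hG' : ∀ n, G' (n + 2) = G' (n + 1) + G' n) :
    ∀ a m, G (a + 1) * G' (m + 1) + G a * G' m
      = G 1 * G' (a + m + 1) + G 0 * G' (a + m) := by
  intro a
  induction a with
  | zero => intro m; simp
  | succ a ih =>
    intro m
    have := ih (m + 1)
    have h1 := hG a
    have h2 := hG' m
    have : G (a + 1 + 1) * G' (m + 1) + G (a + 1) * G' m
        = G (a + 1) * G' (m + 2) + G a * G' (m + 1) := by
      rw [h1, h2]; ring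
    rw [this, ih (m + 1)]
    ring_nf

private lemma gib_aux2_s12 (G G' : ℕ → ℤ)
    (hG : ∀ n, G (n + 2) = G (n + 1) + G n)
    (hG' : ∀ n, G' (n + 2) = G' (n + 1) + G' n)
    (h0 : G' 0 = G 1) (h1 : G' 1 = G 0) :
    ∀ k, G 0 * G (k + 1) + G 1 * G k = G 1 * G' (k + 1) + G 0 * G' k := by
  intro k
  induction k using Nat.twoStepInduction with
  | zero => rw [h0, h1]; ring
  | one =>
    have c1 : G 2 = G 1 + G 0 := hG 0
    have c2 : G' 2 = G' 1 + G' 0 := hG' 0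
    show G 0 * G 2 + G 1 * G 1 = G 1 * G' 2 + G 0 * G' 1
    rw [c1, c2, h0, h1]; ring
  | more k ih1 ih2 =>
    have ih2' : G 0 * G (k + 2) + G 1 * G (k + 1) = G 1 * G' (k + 2) + G 0 * G' (k + 1) := ih2
    have a1 : G (k + 3) = G (k + 2) + G (k + 1) := hG (k + 1)
    have a2 : G' (k + 3) = G' (k + 2) + G' (k + 1) := hG' (k + 1)
    have b1 : G (k + 2) = G (k + 1) + G k := hG k
    have b2 : G' (k + 2) = G' (k + 1) + G' k := hG' k
    show G 0 * G (k + 3) + G 1 * G (k + 2) = G 1 * G' (k + 3) + G 0 * G' (k + 2)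
    linear_combination ih1 + ih2' + G 0 * a1 + G 1 * b1 - G 1 * a2 - G 0 * b2

theorem gibonacci_modified_split (G G' : ℕ → ℤ)
    (hG : ∀ n, G (n + 2) = G (n + 1) + G n)
    (hG' : ∀ n, G' (n + 2) = G' (n + 1) + G' n)
    (h0 : G' 0 = G 1) (h1 : G' 1 = G 0)
    (n N : ℕ) (hn : 2 ≤ n) (hN1 : 1 ≤ N) (hN2 : N ≤ n - 1) :
    G N * G' (n - N) + G (N - 1) * G' (n - N - 1) = G 0 * G (n - 1) + G 1 * G (n - 2) ∧
      G 0 * G (n - 1) + G 1 * G (n - 2) = G 1 * G' (n - 1) + G 0 * G' (n - 2) := by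
  obtain ⟨a, rfl⟩ : ∃ a, N = a + 1 := ⟨N - 1, by omega⟩
  obtain ⟨m, hm⟩ : ∃ m, n - (a + 1) = m + 1 := ⟨n - a - 2, by omega⟩
  have key := gib_aux G G' hG hG' a m
  have key2 := gib_aux2_s12 G G' hG hG' h0 h1 (n - 2)
  have e1 : a + 1 - 1 = a := by omega
  have e2 : n - (a + 1) - 1 = m := by omega
  have e3 : a + m + 1 = n - 1 := by omega
  have e4 : a + m = n - 2 := by omega
  have e5 : n - 2 + 1 = n - 1 := by omega
  rw [hm, e1, Nat.add_sub_cancel, key, e3, e4]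
  rw [e5] at key2
  constructor <;> linarith
end

section
/- Let G be a Gibonacci sequence and G′ its modified Gibonacci sequence. For every natural number n ≥ 2, one has G_1 · (G_n − G′_n) + G_0 · (G_{n−1} − G′_{n−1}) = (G_1 − G_0) · G_{n−2}. -/
theorem gibonacci_modified_weighted_diff (G G' : ℕ → ℤ)
    (hG : ∀ n, G (n + 2) = G (n + 1) + G n)
    (hG' : ∀ n, G' (n + 2) = G' (n + 1) + G' n)
    (h0 : G' 0 = G 1) (h1 : G' 1 = G 0)
    (n : ℕ) (hn : 2 ≤ n) :
    G 1 * (G n - G' n) + G 0 * (G (n - 1) - G' (n - 1)) = (G 1 - G 0) * G (n - 2) := by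
  obtain ⟨k, rfl⟩ := Nat.exists_eq_add_of_le hn
  have key : ∀ k, G 1 * (G (k + 2) - G' (k + 2)) + G 0 * (G (k + 1) - G' (k + 1))
      = (G 1 - G 0) * G k := by
    intro k
    induction k using Nat.twoStepInduction with
    | zero => simp [hG 0, hG' 0, h0, h1]; ring
    | one =>
      rw [hG 1, hG' 1, show (1:ℕ) + 1 = 0 + 2 from rfl, hG 0, hG' 0, h0, h1]; ring
    | more m ih1 ih2 =>
      simp only [show m + 1 + 2 = m + 2 + 1 from rfl, show m + 1 + 1 = m + 2 from rfl] at ih2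
      linear_combination ih1 + ih2 + G 1 * hG (m + 2) - G 1 * hG' (m + 2) +
        G 0 * hG (m + 1) - G 0 * hG' (m + 1) - (G 1 - G 0) * hG m
  have h2 : 2 + k = k + 2 := by ring
  have ha : k + 2 - 1 = k + 1 := by omega
  have hb : k + 2 - 2 = k := by omega
  rw [h2, ha, hb]
  exact key k
end

section
/- Let G be a Gibonacci sequence. For all natural numbers n and p with 1 ≤ p ≤ n, one has G_n^2 = G_{n+p} · G_{n−p} + (−1)^{n+p−1} · f_{p−1} · (G_0 · G_{p+1} − G_1 · G_p). -/
private lemma fib_cast_add_two (p : ℕ) :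
    (Nat.fib (p + 2) : ℤ) = Nat.fib p + Nat.fib (p + 1) := by
  rw [Nat.fib_add_two]; push_cast; ring

private lemma gib_add (G : ℕ → ℤ) (hG : ∀ n, G (n + 2) = G (n + 1) + G n) :
    ∀ p m, G (m + p) = (Nat.fib p : ℤ) * G (m + 1) +
      ((Nat.fib (p + 1) : ℤ) - (Nat.fib p : ℤ)) * G m := by
  intro p
  induction p using Nat.twoStepInduction with
  | zero => intro m; simp
  | one => intro m; simp
  | more p ih1 ih2 =>
    intro m
    have e : m + (p + 2) = (m + p) + 2 := by ring
    rw [e, hG (m + p)]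
    have e1 : m + p + 1 = m + (p + 1) := by ring
    rw [e1, ih2 m, ih1 m, fib_cast_add_two,
      show p + 2 + 1 = (p + 1) + 2 by ring, fib_cast_add_two (p + 1),
      fib_cast_add_two]
    ring

private lemma cassini' : ∀ p : ℕ,
    (Nat.fib (p + 1) : ℤ) ^ 2 - (Nat.fib (p + 1) : ℤ) * (Nat.fib p : ℤ)
      - (Nat.fib p : ℤ) ^ 2 = (-1) ^ p := by
  intro p
  induction p with
  | zero => simp
  | succ p ih =>
    rw [fib_cast_add_two, pow_succ]
    linear_combination (-1 : ℤ) * ih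

private lemma gib_inv (G : ℕ → ℤ) (hG : ∀ n, G (n + 2) = G (n + 1) + G n) :
    ∀ n : ℕ, G (n + 1) ^ 2 - G (n + 1) * G n - G n ^ 2
      = (-1) ^ n * (G 1 ^ 2 - G 1 * G 0 - G 0 ^ 2) := by
  intro n
  induction n with
  | zero => simp
  | succ n ih =>
    rw [hG n, pow_succ]
    linear_combination (-1 : ℤ) * ih

theorem gibonacci_catalan_like (G : ℕ → ℤ)
    (hG : ∀ n, G (n + 2) = G (n + 1) + G n)
    (n p : ℕ) (hp1 : 1 ≤ p) (hpn : p ≤ n) :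
    G n ^ 2 = G (n + p) * G (n - p) +
      (-1 : ℤ) ^ (n + p - 1) * (f (p - 1) : ℤ) * (G 0 * G (p + 1) - G 1 * G p) := by
  have hf : f (p - 1) = Nat.fib p := by unfold f; congr 1; omega
  set u : ℤ := (Nat.fib p : ℤ) with hu
  set v : ℤ := (Nat.fib (p + 1) : ℤ) with hv
  obtain ⟨s, hs⟩ : ∃ s : ℤ, (-1 : ℤ) ^ p = s := ⟨_, rfl⟩
  obtain ⟨t, ht⟩ : ∃ t : ℤ, (-1 : ℤ) ^ n = t := ⟨_, rfl⟩
  have hs2 : s * s = 1 := by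
    rw [← hs, ← pow_add, ← two_mul, pow_mul]; norm_num
  have hkst : (-1 : ℤ) ^ (n + p - 1) = -(t * s) := by
    obtain ⟨k, hk⟩ : ∃ k, n + p = k + 1 := ⟨n + p - 1, by omega⟩
    have hts : t * s = (-1 : ℤ) ^ (n + p) := by rw [← hs, ← ht, pow_add]
    have he : n + p - 1 = k := by omega
    rw [he, hts, hk, pow_succ]; ring
  have h1 : G (n + p) = u * G (n + 1) + (v - u) * G n := gib_add G hG p n
  have h2 : G n = u * G (n - p + 1) + (v - u) * G (n - p) := by
    have := gib_add G hG p (n - p)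
    rwa [Nat.sub_add_cancel hpn] at this
  have h3 : G (n + 1) = v * G (n - p + 1) + u * G (n - p) := by
    have := gib_add G hG (p + 1) (n - p)
    rw [show n - p + (p + 1) = n - p + p + 1 by ring, Nat.sub_add_cancel hpn,
      fib_cast_add_two] at this
    rw [this, ← hu, ← hv]; ring
  have hc : v ^ 2 - v * u - u ^ 2 = s := by rw [← hs]; exact cassini' p
  have h4 : G (n - p) = s * (v * G n - u * G (n + 1)) := by
    have key : (v ^ 2 - v * u - u ^ 2) * G (n - p) = v * G n - u * G (n + 1) := by
      linear_combination u * h3 - v * h2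
    rw [hc] at key
    rw [← key, ← mul_assoc, hs2, one_mul]
  have h5 : G p = u * G 1 + (v - u) * G 0 := by
    have := gib_add G hG p 0
    rwa [zero_add, zero_add] at this
  have h6 : G (p + 1) = v * G 1 + u * G 0 := by
    have := gib_add G hG (p + 1) 0
    rw [zero_add, zero_add, fib_cast_add_two] at this
    rw [this, ← hu, ← hv]; ring
  have h7 : G (n + 1) ^ 2 - G (n + 1) * G n - G n ^ 2
      = t * (G 1 ^ 2 - G 1 * G 0 - G 0 ^ 2) := by
    rw [← ht]; exact gib_inv G hG n
  rw [hf, hkst, ← hu, h1, h4, h5, h6]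
  linear_combination (-(s * G n ^ 2)) * hc + (s * u ^ 2) * h7 - (G n ^ 2) * hs2
end

section
/- Let G be a Gibonacci sequence. For all natural numbers m ≥ 1 and r ≥ 1, the integer G_m divides G_{m·r} − G_{m−1} · F_{(r−1)·m}; equivalently, G_{m·r} ≡ G_{m−1} · F_{(r−1)·m} (mod G_m). -/
lemma gibonacci_add (G : ℕ → ℤ)
    (hG : ∀ n, G (n + 2) = G (n + 1) + G n)
    (a : ℕ) (ha : 1 ≤ a) (b : ℕ) :
    G (a + b) = (Nat.fib (b + 1) : ℤ) * G a + (Nat.fib b : ℤ) * G (a - 1) := by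
  induction b using Nat.twoStepInduction with
  | zero => simp
  | one =>
    obtain ⟨a', rfl⟩ : ∃ a', a = a' + 1 := ⟨a - 1, by omega⟩
    have := hG a'
    simp [this]
  | more b ih1 ih2 =>
    have h1 : a + (b + 2) = (a + b) + 2 := by ring
    rw [h1, hG (a + b)]
    have h2 : a + (b + 1) = (a + b) + 1 := by ring
    rw [h2] at ih2
    rw [ih1, ih2]
    have f1 : (Nat.fib (b + 3) : ℤ) = Nat.fib (b + 2) + Nat.fib (b + 1) := by
      rw [Nat.fib_add_two]; push_cast; ring
    have f2 : (Nat.fib (b + 2) : ℤ) = Nat.fib (b + 1) + Nat.fib b := by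
      rw [Nat.fib_add_two]; push_cast; ring
    rw [f1, f2]
    ring

theorem gibonacci_divisibility (G : ℕ → ℤ)
    (hG : ∀ n, G (n + 2) = G (n + 1) + G n)
    (m r : ℕ) (hm : 1 ≤ m) (hr : 1 ≤ r) :
    G m ∣ G (m * r) - G (m - 1) * (Nat.fib ((r - 1) * m) : ℤ) := by
  obtain ⟨r', rfl⟩ : ∃ r', r = r' + 1 := ⟨r - 1, by omega⟩
  have hmr : m * (r' + 1) = m + r' * m := by ring
  have hr1 : (r' + 1 - 1) * m = r' * m := by simp
  rw [hmr, hr1, gibonacci_add G hG m hm (r' * m)]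
  exact ⟨Nat.fib (r' * m + 1), by ring⟩
end

section
/- For all natural numbers N ≥ 2 and n ≥ N + 1, setting d = ⌊(n−1)/N⌋ (so d ≥ 1), the Fibonacci numbers satisfy the lacunary recurrence F_n = F_{N+1} · F_{n−N} + F_N^2 · Σ_{k=2}^{d} F_{N−1}^{k−2} · F_{n−kN} + F_N · F_{N−1}^{d−1} · F_{(n−1) mod N}. -/
lemma fib_aux (N : ℕ) (hN : 2 ≤ N) : ∀ d n : ℕ, N + 1 ≤ n → (n - 1) / N = d →
    Nat.fib (n - N - 1) =
      Nat.fib N * (∑ k ∈ Finset.Icc 2 d, Nat.fib (N - 1) ^ (k - 2) * Nat.fib (n - k * N)) +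
        Nat.fib (N - 1) ^ (d - 1) * Nat.fib ((n - 1) % N) := by
  intro d
  induction d with
  | zero =>
    intro n hn hd
    have h1 : 1 ≤ (n - 1) / N := (Nat.one_le_div_iff (by omega)).2 (by omega)
    omega
  | succ e ih =>
    intro n hn hd
    have hr : (n - 1) % N < N := Nat.mod_lt _ (by omega)
    have hdm := Nat.div_add_mod (n - 1) N
    rw [hd] at hdm
    have hmulN : N * (e + 1) = N * e + N := by ring
    rcases Nat.eq_zero_or_pos e with he | he
    · -- base case d = 1
      subst he
      have hempty : Finset.Icc 2 1 = ∅ := by decide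
      rw [hempty, Finset.sum_empty, mul_zero, zero_add, pow_zero, one_mul]
      congr 1
      omega
    · -- step: e ≥ 1, so n ≥ 2N + 1
      have hNe : N ≤ N * e := Nat.le_mul_of_pos_right N he
      have hn2 : 2 * N + 1 ≤ n := by omega
      have hstep := Nat.fib_add (N - 1) (n - 2 * N - 1)
      have e1 : (N - 1) + (n - 2 * N - 1) + 1 = n - N - 1 := by omega
      have e2 : (N - 1) + 1 = N := by omega
      have e3 : (n - 2 * N - 1) + 1 = n - 2 * N := by omega
      rw [e1, e2, e3] at hstep
      have hsub : n - N - 1 = N * e + (n - 1) % N := by omega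
      have hdiv : (n - N - 1) / N = e := by
        rw [hsub, Nat.mul_add_div (by omega), Nat.div_eq_of_lt hr]
        omega
      have hmod : (n - N - 1) % N = (n - 1) % N := by
        rw [hsub, Nat.mul_add_mod, Nat.mod_eq_of_lt hr]
      have hih := ih (n - N) (by omega) hdiv
      rw [hmod, show n - N - N - 1 = n - 2 * N - 1 by omega] at hih
      have hshift : ∑ k ∈ Finset.Icc 2 e, Nat.fib (N - 1) ^ (k - 2) * Nat.fib (n - N - k * N)
          = ∑ k ∈ Finset.Icc 3 (e + 1), Nat.fib (N - 1) ^ (k - 3) * Nat.fib (n - k * N) := by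
        rw [show (3 : ℕ) = 2 + 1 from rfl, ← Finset.map_add_right_Icc, Finset.sum_map]
        apply Finset.sum_congr rfl
        intro k hk
        simp only [addRightEmbedding_apply]
        have hkN : (k + 1) * N = k * N + N := by ring
        rw [show k + 1 - 3 = k - 2 by omega, show n - (k + 1) * N = n - N - k * N by omega]
      have hsplit : Finset.Icc 2 (e + 1) = insert 2 (Finset.Icc 3 (e + 1)) := by
        ext x; simp [Finset.mem_Icc]; omega
      have hpow : Nat.fib (N - 1) * Nat.fib (N - 1) ^ (e - 1) = Nat.fib (N - 1) ^ e := by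
        rw [← pow_succ']; congr 1; omega
      have hpshift : Nat.fib (N - 1) *
          ∑ k ∈ Finset.Icc 3 (e + 1), Nat.fib (N - 1) ^ (k - 3) * Nat.fib (n - k * N)
            = ∑ k ∈ Finset.Icc 3 (e + 1), Nat.fib (N - 1) ^ (k - 2) * Nat.fib (n - k * N) := by
        rw [Finset.mul_sum]
        apply Finset.sum_congr rfl
        intro k hk
        simp only [Finset.mem_Icc] at hk
        rw [← mul_assoc, ← pow_succ', show k - 3 + 1 = k - 2 by omega]
      rw [hstep, hih, hshift, hsplit, Finset.sum_insert (by simp)]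
      rw [show (2 : ℕ) - 2 = 0 from rfl, pow_zero, one_mul, show e + 1 - 1 = e from rfl]
      calc Nat.fib (N - 1) * (Nat.fib N *
              ∑ k ∈ Finset.Icc 3 (e + 1), Nat.fib (N - 1) ^ (k - 3) * Nat.fib (n - k * N) +
            Nat.fib (N - 1) ^ (e - 1) * Nat.fib ((n - 1) % N)) + Nat.fib N * Nat.fib (n - 2 * N)
          = Nat.fib N * (Nat.fib (N - 1) *
              ∑ k ∈ Finset.Icc 3 (e + 1), Nat.fib (N - 1) ^ (k - 3) * Nat.fib (n - k * N)) +
            (Nat.fib (N - 1) * Nat.fib (N - 1) ^ (e - 1)) * Nat.fib ((n - 1) % N) +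
            Nat.fib N * Nat.fib (n - 2 * N) := by ring
        _ = _ := by rw [hpshift, hpow]; ring

theorem fibonacci_lacunary_recurrence (N n : ℕ) (hN : 2 ≤ N) (hn : N + 1 ≤ n) :
    Nat.fib n =
      Nat.fib (N + 1) * Nat.fib (n - N) +
        Nat.fib N ^ 2 *
          (∑ k ∈ Finset.Icc 2 ((n - 1) / N),
            Nat.fib (N - 1) ^ (k - 2) * Nat.fib (n - k * N)) +
        Nat.fib N * Nat.fib (N - 1) ^ ((n - 1) / N - 1) * Nat.fib ((n - 1) % N) := by
  have haux := fib_aux N hN ((n - 1) / N) n hn rfl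
  have hstep := Nat.fib_add N (n - N - 1)
  have e1 : N + (n - N - 1) + 1 = n := by omega
  have e2 : (n - N - 1) + 1 = n - N := by omega
  rw [e1, e2] at hstep
  rw [hstep, haux]
  ring
end
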